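/- For every δ > 0 and all f, g ∈ L¹(V) with f ≥ 0 almost everywhere, the quantity J₂ := ∫_V [σ(⟨f⟩)f(v) − σ(⟨g⟩)g(v)]·[φ_δ'(⟨f⟩ − ⟨g⟩) − φ_δ'(f(v) − g(v))] dv satisfies J₂ ≤ C(1 + ‖f‖_{L¹(V)})·δ for a constant C depending only on the Lipschitz constant of σ and on σ^*. -/

import Mathlib

/- STATEMENT 5: For every `δ > 0` and all `f, g ∈ L¹(V)` with `f ≥ 0` a.e., the quantity
`J₂ = ∫_V [σ(⟨f⟩)f − σ(⟨g⟩)g] [φ_δ'(⟨f⟩ − ⟨g⟩) − φ_δ'(f − g)] dv` satisfies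
`J₂ ≤ C (1 + ‖f‖_{L¹}) δ` for a constant `C` depending only on the Lipschitz constant
of `σ` and on `σ^*`. Here `φ_δ'(x) = ψ(x/δ)`. -/

open MeasureTheory

noncomputable section

/-- The `N`-dimensional torus with its (normalized) Lebesgue measure. -/
abbrev Torus (N : ℕ) := Fin N → AddCircle (1 : ℝ)

/-- Pointwise key estimate. -/
lemma J2_ptwise (σ : ℝ → ℝ) (σStar : ℝ) (K : NNReal)
    (hσpos : ∀ y : ℝ, 0 < σ y) (hσle : ∀ y : ℝ, σ y ≤ σStar)
    (hσlip : LipschitzWith K σ) (hσanti : Antitone σ)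
    (ψ : ℝ → ℝ) (hψlo : ∀ x : ℝ, 0 ≤ ψ x) (hψhi : ∀ x : ℝ, ψ x ≤ 1)
    (hψ0 : ∀ x : ℝ, x ≤ 0 → ψ x = 0) (hψ1 : ∀ x : ℝ, 1 ≤ x → ψ x = 1)
    (δ : ℝ) (hδ : 0 < δ) (F G x y : ℝ) (hx : 0 ≤ x) :
    (σ F * x - σ G * y) * (ψ ((F - G) / δ) - ψ ((x - y) / δ))
      ≤ σStar * δ + (K : ℝ) * δ * x := by
  have hσStar0 : 0 < σStar := lt_of_lt_of_le (hσpos 0) (hσle 0)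
  have hc : (0:ℝ) ≤ (K : ℝ) * δ * x := by positivity
  have hkey : ∀ u w : ℝ, ψ u < ψ w → 0 < w ∧ u < 1 := by
    intro u w h
    constructor
    · by_contra hw
      push_neg at hw
      rw [hψ0 w hw] at h
      exact absurd (hψlo u) (not_le.mpr h)
    · by_contra hu
      push_neg at hu
      rw [hψ1 u hu] at h
      exact absurd (hψhi w) (not_le.mpr h)
  set B : ℝ := ψ ((F - G) / δ) - ψ ((x - y) / δ) with hBdef
  have hB1 : B ≤ 1 := by
    have := hψlo ((x - y) / δ); have := hψhi ((F - G) / δ); simp only [hBdef]; linarith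
  have hBm1 : -1 ≤ B := by
    have := hψhi ((x - y) / δ); have := hψlo ((F - G) / δ); simp only [hBdef]; linarith
  rcases lt_trichotomy B 0 with hB | hB | hB
  · -- B < 0 : ψ((x-y)/δ) > ψ((F-G)/δ)
    have hlt : ψ ((F - G) / δ) < ψ ((x - y) / δ) := by
      simp only [hBdef] at hB; linarith
    obtain ⟨hw, hu⟩ := hkey _ _ hlt
    have hxy : 0 < x - y := by
      have := mul_pos hw hδ
      rwa [div_mul_cancel₀ _ (ne_of_gt hδ)] at this
    have hFG : F - G < δ := by
      have := (div_lt_one hδ).mp hu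
      linarith
    -- lower bound on A
    have h1 : σ G * y ≤ σ G * x :=
      mul_le_mul_of_nonneg_left (by linarith) (hσpos G).le
    have h2 : σ (G + δ) ≤ σ F := hσanti (by linarith)
    have h3 : |σ (G + δ) - σ G| ≤ (K : ℝ) * δ := by
      have := hσlip.dist_le_mul (G + δ) G
      rw [Real.dist_eq, Real.dist_eq] at this
      simpa [abs_of_pos hδ] using this
    have h4 : σ G - (K : ℝ) * δ ≤ σ (G + δ) := by
      have := (abs_le.mp h3).1; linarith
    have h5 : (σ G - (K : ℝ) * δ) * x ≤ σ F * x :=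
      mul_le_mul_of_nonneg_right (by linarith) hx
    have hA : -((K : ℝ) * δ * x) ≤ σ F * x - σ G * y := by nlinarith
    nlinarith [mul_nonneg (by linarith : (0:ℝ) ≤ σ F * x - σ G * y + (K : ℝ) * δ * x)
        (by linarith : (0:ℝ) ≤ -B),
      mul_nonneg hc (by linarith : (0:ℝ) ≤ B + 1),
      mul_pos hσStar0 hδ]
  · rw [hB, mul_zero]; positivity
  · -- B > 0 : ψ((F-G)/δ) > ψ((x-y)/δ)
    have hlt : ψ ((x - y) / δ) < ψ ((F - G) / δ) := by
      simp only [hBdef] at hB; linarith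
    obtain ⟨hw, hu⟩ := hkey _ _ hlt
    have hFG : 0 < F - G := by
      have := mul_pos hw hδ
      rwa [div_mul_cancel₀ _ (ne_of_gt hδ)] at this
    have hxy : x - y < δ := by
      have := (div_lt_one hδ).mp hu
      linarith
    have h1 : σ G * (x - δ) ≤ σ G * y :=
      mul_le_mul_of_nonneg_left (by linarith) (hσpos G).le
    have h2 : σ F * x ≤ σ G * x :=
      mul_le_mul_of_nonneg_right (hσanti (by linarith)) hx
    have hA : σ F * x - σ G * y ≤ σ G * δ := by nlinarith
    have hA' : σ F * x - σ G * y ≤ σStar * δ := by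
      have := mul_le_mul_of_nonneg_right (hσle G) hδ.le
      linarith
    nlinarith [mul_le_mul_of_nonneg_right hA' hB.le,
      mul_le_of_le_one_right (by positivity : (0:ℝ) ≤ σStar * δ) hB1]

theorem J2_bound
    (N : ℕ) (σ : ℝ → ℝ) (σstar σStar : ℝ) (K : NNReal)
    (hσstar : 0 < σstar) (hσStar : 0 < σStar)
    (hσbound : ∀ y : ℝ, σstar ≤ σ y ∧ σ y ≤ σStar)
    (hσlip : LipschitzWith K σ)
    (hσanti : Antitone σ)
    (hσmono : Monotone fun y : ℝ => σ y * y)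
    (ψ : ℝ → ℝ) (hψC2 : ContDiff ℝ 2 ψ) (hψmono : Monotone ψ)
    (hψ0 : ∀ x : ℝ, x ≤ 0 → ψ x = 0) (hψ1 : ∀ x : ℝ, 1 ≤ x → ψ x = 1)
    (hψmid : ∀ x ∈ Set.Ioo (0 : ℝ) 1, 0 < ψ x ∧ ψ x < 1) :
    ∃ C > (0 : ℝ), ∀ δ > (0 : ℝ), ∀ f g : Torus N → ℝ,
      Integrable f → Integrable g → 0 ≤ᵐ[volume] f →
      ∫ v, (σ (∫ w, f w) * f v - σ (∫ w, g w) * g v) *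
          (ψ (((∫ w, f w) - ∫ w, g w) / δ) - ψ ((f v - g v) / δ))
        ≤ C * (1 + ∫ v, |f v|) * δ := by
  have hσpos : ∀ y : ℝ, 0 < σ y := fun y => lt_of_lt_of_le hσstar (hσbound y).1
  have hσle : ∀ y : ℝ, σ y ≤ σStar := fun y => (hσbound y).2
  have hψlo : ∀ x : ℝ, 0 ≤ ψ x := by
    intro x
    rcases le_or_gt x 0 with h | h
    · rw [hψ0 x h]
    · rcases le_or_gt 1 x with h1 | h1
      · rw [hψ1 x h1]; norm_num
      · exact (hψmid x ⟨h, h1⟩).1.le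
  have hψhi : ∀ x : ℝ, ψ x ≤ 1 := by
    intro x
    rcases le_or_gt x 0 with h | h
    · rw [hψ0 x h]; norm_num
    · rcases le_or_gt 1 x with h1 | h1
      · rw [hψ1 x h1]
      · exact (hψmid x ⟨h, h1⟩).2.le
  have hprob : IsProbabilityMeasure (volume : Measure (Torus N)) := by
    constructor
    rw [volume_pi, Measure.pi_univ]
    simp [AddCircle.measure_univ]
  refine ⟨σStar + (K : ℝ), by positivity, ?_⟩
  intro δ hδ f g hf hg hf0
  set F : ℝ := ∫ w, f w with hF
  set G : ℝ := ∫ w, g w with hG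
  have hH : Integrable (fun v => σ F * f v - σ G * g v) :=
    (hf.const_mul _).sub (hg.const_mul _)
  have hmeas : AEStronglyMeasurable
      (fun v : Torus N => ψ ((F - G) / δ) - ψ ((f v - g v) / δ)) volume := by
    refine aestronglyMeasurable_const.sub ?_
    refine hψC2.continuous.comp_aestronglyMeasurable ?_
    have := (hf.1.sub hg.1).mul_const δ⁻¹
    simpa [div_eq_mul_inv] using this
  have hbdd : ∀ v : Torus N, ‖ψ ((F - G) / δ) - ψ ((f v - g v) / δ)‖ ≤ 1 := by
    intro v
    rw [Real.norm_eq_abs]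
    have h1 := hψlo ((F - G) / δ); have h2 := hψhi ((F - G) / δ)
    have h3 := hψlo ((f v - g v) / δ); have h4 := hψhi ((f v - g v) / δ)
    rw [abs_le]; constructor <;> linarith
  have hI : Integrable (fun v => (σ F * f v - σ G * g v) *
      (ψ ((F - G) / δ) - ψ ((f v - g v) / δ))) := by
    have := hH.bdd_mul hmeas (Filter.Eventually.of_forall hbdd)
    simpa [mul_comm] using this
  have hh : Integrable (fun v : Torus N => σStar * δ + (K : ℝ) * δ * f v) :=
    (integrable_const _).add (hf.const_mul _)
  have hle : (fun v => (σ F * f v - σ G * g v) *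
      (ψ ((F - G) / δ) - ψ ((f v - g v) / δ)))
      ≤ᵐ[volume] fun v => σStar * δ + (K : ℝ) * δ * f v := by
    filter_upwards [hf0] with v hv
    exact J2_ptwise σ σStar K hσpos hσle hσlip hσanti ψ hψlo hψhi hψ0 hψ1
      δ hδ F G (f v) (g v) hv
  have hint := integral_mono_ae hI hh hle
  have habs : Integrable (fun v => |f v|) := hf.abs
  have hfabs : F ≤ ∫ v, |f v| := by
    rw [hF]
    exact integral_mono hf habs (fun v => le_abs_self _)
  have habsnn : (0:ℝ) ≤ ∫ v, |f v| := integral_nonneg fun v => abs_nonneg _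
  have hcomp : ∫ v, (σStar * δ + (K : ℝ) * δ * f v)
      = σStar * δ + (K : ℝ) * δ * F := by
    rw [integral_add (integrable_const _) (hf.const_mul _), integral_const,
      integral_const_mul]
    simp [hF]
  rw [hcomp] at hint
  have : σStar * δ + (K : ℝ) * δ * F ≤ (σStar + (K : ℝ)) * (1 + ∫ v, |f v|) * δ := by
    have hK : (0:ℝ) ≤ (K : ℝ) := K.coe_nonneg
    nlinarith [mul_le_mul_of_nonneg_left hfabs (mul_nonneg hK hδ.le),
      mul_nonneg habsnn hδ.le, mul_nonneg (mul_nonneg hK habsnn) hδ.le]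
    
  linarith
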